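/- Let K, H be finite-dimensional complex Hilbert spaces and φ : B(K) → B(H) a nonzero 2-positive map that is extremal in the cone of positive maps. Then φ is completely positive. -/

import Mathlib

open Matrix ComplexOrder

/-- A linear map between matrix algebras is positive if it maps positive
semidefinite matrices to positive semidefinite matrices. -/
def PosMap {n m : ℕ} (φ : Matrix (Fin n) (Fin n) ℂ →ₗ[ℂ] Matrix (Fin m) (Fin m) ℂ) : Prop :=
  ∀ X : Matrix (Fin n) (Fin n) ℂ, X.PosSemidef → (φ X).PosSemidef

/-- `P` is a one-dimensional orthogonal projection. -/
def IsProj1 {n : ℕ} (P : Matrix (Fin n) (Fin n) ℂ) : Prop :=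
  P.IsHermitian ∧ P * P = P ∧ P.rank = 1

/-- The ampliation `id ⊗ φ` applied blockwise to a `k × k` block matrix. -/
def amp {n m : ℕ} (k : ℕ) (φ : Matrix (Fin n) (Fin n) ℂ →ₗ[ℂ] Matrix (Fin m) (Fin m) ℂ)
    (M : Matrix (Fin k × Fin n) (Fin k × Fin n) ℂ) : Matrix (Fin k × Fin m) (Fin k × Fin m) ℂ :=
  Matrix.of fun p q => φ (Matrix.of fun a b => M (p.1, a) (q.1, b)) p.2 q.2

/-- Complete positivity: all ampliations preserve positive semidefiniteness. -/
def CompletelyPositive {n m : ℕ}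
    (φ : Matrix (Fin n) (Fin n) ℂ →ₗ[ℂ] Matrix (Fin m) (Fin m) ℂ) : Prop :=
  ∀ (k : ℕ) (M : Matrix (Fin k × Fin n) (Fin k × Fin n) ℂ),
    M.PosSemidef → (amp k φ M).PosSemidef

/-- Complete copositivity: `X ↦ φ(Xᵀ)` is completely positive. -/
def CompletelyCopositive {n m : ℕ}
    (φ : Matrix (Fin n) (Fin n) ℂ →ₗ[ℂ] Matrix (Fin m) (Fin m) ℂ) : Prop :=
  ∀ (k : ℕ) (M : Matrix (Fin k × Fin n) (Fin k × Fin n) ℂ), M.PosSemidef →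
    (Matrix.of fun p q : Fin k × Fin m =>
      φ (Matrix.of fun a b => M (p.1, b) (q.1, a)) p.2 q.2).PosSemidef

/-- `φ` is extremal in the cone of positive maps. -/
def IsExtremalPos {n m : ℕ}
    (φ : Matrix (Fin n) (Fin n) ℂ →ₗ[ℂ] Matrix (Fin m) (Fin m) ℂ) : Prop :=
  PosMap φ ∧ ∀ ψ, PosMap ψ → PosMap (φ - ψ) → ∃ l : ℝ, 0 ≤ l ∧ ψ = (l : ℂ) • φ

/-- `φ` is decomposable: a sum of a completely positive and a completely
copositive map. -/
def Decomposable {n m : ℕ}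
    (φ : Matrix (Fin n) (Fin n) ℂ →ₗ[ℂ] Matrix (Fin m) (Fin m) ℂ) : Prop :=
  ∃ φ₁ φ₂, CompletelyPositive φ₁ ∧ CompletelyCopositive φ₂ ∧ φ = φ₁ + φ₂

/-- A map is 2-positive if its ampliation to 2x2 block matrices is positive. -/
def TwoPositive {n m : ℕ}
    (φ : Matrix (Fin n) (Fin n) ℂ →ₗ[ℂ] Matrix (Fin m) (Fin m) ℂ) : Prop :=
  ∀ M : Matrix (Fin 2 × Fin n) (Fin 2 × Fin n) ℂ, M.PosSemidef → (amp 2 φ M).PosSemidef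



section Helpers
variable {I : Type*} [Fintype I] [DecidableEq I]

lemma rank_one_form (v y : I → ℂ) :
    star y ⬝ᵥ (vecMulVec v (star v) *ᵥ y) = (Complex.normSq (star y ⬝ᵥ v) : ℂ) := by
  have h1 : star y ⬝ᵥ (vecMulVec v (star v) *ᵥ y) = (star y ⬝ᵥ v) * (star v ⬝ᵥ y) := by
    simp only [dotProduct, mulVec, vecMulVec, Matrix.of_apply, Pi.star_apply,
      Finset.mul_sum, Finset.sum_mul]
    rw [Finset.sum_comm]
    apply Finset.sum_congr rfl; intro i _
    apply Finset.sum_congr rfl; intro j _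
    ring
  have h2 : star v ⬝ᵥ y = starRingEnd ℂ (star y ⬝ᵥ v) := by
    simp only [dotProduct, Pi.star_apply, map_sum, _root_.map_mul, Complex.star_def]
    apply Finset.sum_congr rfl; intro i _
    simp [mul_comm, Complex.conj_conj]
  rw [h1, h2, Complex.mul_conj]

lemma psd_exists_conj {N : Matrix I I ℂ} (hN : N.PosSemidef) :
    ∃ B : Matrix I I ℂ, N = Bᴴ * B := by
  open scoped MatrixOrder in
  obtain ⟨B, hB⟩ := CStarAlgebra.nonneg_iff_eq_star_mul_self.mp hN.nonneg
  exact ⟨B, hB⟩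

lemma psd_vecMulVec (v : I → ℂ) : (vecMulVec v (star v)).PosSemidef := by
  refine Matrix.PosSemidef.of_dotProduct_mulVec_nonneg ?_ ?_
  · ext i j
    simp [vecMulVec, conjTranspose_apply, mul_comm]
  · intro y
    rw [rank_one_form]
    exact_mod_cast Complex.normSq_nonneg _

lemma psd_smul_real {M : Matrix I I ℂ} (hM : M.PosSemidef) {r : ℝ} (hr : 0 ≤ r) :
    (((r : ℂ)) • M).PosSemidef := by
  refine Matrix.PosSemidef.of_dotProduct_mulVec_nonneg ?_ ?_
  · ext i j
    simp [conjTranspose_apply, hM.1.apply]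
  · intro y
    have := hM.dotProduct_mulVec_nonneg y
    calc (0:ℂ) = (r:ℂ) * 0 := by ring
    _ ≤ (r:ℂ) * (star y ⬝ᵥ M *ᵥ y) := by
        apply mul_le_mul_of_nonneg_left this (by exact_mod_cast hr)
    _ = star y ⬝ᵥ (((r:ℂ)) • M) *ᵥ y := by
        simp [smul_mulVec, dotProduct_smul, smul_eq_mul]

lemma psd_cs {N : Matrix I I ℂ} (hN : N.PosSemidef) (u w : I → ℂ) :
    Complex.normSq (star u ⬝ᵥ (N *ᵥ w)) ≤
      (star u ⬝ᵥ (N *ᵥ u)).re * (star w ⬝ᵥ (N *ᵥ w)).re := by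
  obtain ⟨B, rfl⟩ := psd_exists_conj hN
  have key : ∀ a b : I → ℂ, star a ⬝ᵥ ((Bᴴ * B) *ᵥ b) = star (B *ᵥ a) ⬝ᵥ (B *ᵥ b) := by
    intro a b
    rw [← Matrix.mulVec_mulVec, Matrix.dotProduct_mulVec, ← Matrix.star_mulVec]
  rw [key, key, key]
  set p : EuclideanSpace ℂ I := WithLp.toLp 2 (B *ᵥ u) with hp
  set q : EuclideanSpace ℂ I := WithLp.toLp 2 (B *ᵥ w) with hq
  have hip : ∀ a b : EuclideanSpace ℂ I, (inner ℂ a b : ℂ) = star a.ofLp ⬝ᵥ b.ofLp := by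
    intro a b
    simp [PiLp.inner_apply, dotProduct, RCLike.inner_apply, mul_comm]
  rw [show star (B *ᵥ u) ⬝ᵥ (B *ᵥ w) = inner ℂ p q from (hip p q).symm,
    show star (B *ᵥ u) ⬝ᵥ (B *ᵥ u) = inner ℂ p p from (hip p p).symm,
    show star (B *ᵥ w) ⬝ᵥ (B *ᵥ w) = inner ℂ q q from (hip q q).symm]
  have h1 : Complex.normSq (inner ℂ p q : ℂ) = ‖(inner ℂ p q : ℂ)‖^2 := by
    rw [← Complex.sq_norm]
  rw [h1]
  have h2 : (inner ℂ p p : ℂ).re = ‖p‖^2 := by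
    exact_mod_cast inner_self_eq_norm_sq (𝕜 := ℂ) p
  have h3 : (inner ℂ q q : ℂ).re = ‖q‖^2 := by
    exact_mod_cast inner_self_eq_norm_sq (𝕜 := ℂ) q
  rw [h2, h3]
  calc ‖(inner ℂ p q : ℂ)‖^2 ≤ (‖p‖ * ‖q‖)^2 := by
        apply pow_le_pow_left₀ (norm_nonneg _) (norm_inner_le_norm p q)
  _ = ‖p‖^2 * ‖q‖^2 := by ring

lemma psd_sum_rank_one {k : ℕ} {A : Matrix (Fin k) (Fin k) ℂ} (hA : A.PosSemidef) :
    ∃ u : Fin k → (Fin k → ℂ), A = ∑ i, vecMulVec (u i) (star (u i)) := by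
  obtain ⟨B, rfl⟩ := psd_exists_conj hA
  refine ⟨fun i a => star (B i a), ?_⟩
  ext a b
  simp only [Matrix.sum_apply, vecMulVec, Matrix.of_apply, Matrix.mul_apply,
    conjTranspose_apply, Pi.star_apply, star_star]

lemma psd_sum {J : Type*} (s : Finset J) (f : J → Matrix I I ℂ)
    (h : ∀ j ∈ s, (f j).PosSemidef) : (∑ j ∈ s, f j).PosSemidef := by
  classical
  induction s using Finset.induction_on with
  | empty => simpa using Matrix.PosSemidef.zero
  | insert _ _ hj ih =>
    rw [Finset.sum_insert hj]
    exact (h _ (Finset.mem_insert_self _ _)).add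
      (ih fun j hjs => h j (Finset.mem_insert_of_mem hjs))

lemma conj_vecMulVec {J : Type*} [Fintype J] (B : Matrix I J ℂ) (u : J → ℂ) :
    B * vecMulVec u (star u) * Bᴴ = vecMulVec (B *ᵥ u) (star (B *ᵥ u)) := by
  ext s t
  simp only [Matrix.mul_apply, vecMulVec, Matrix.of_apply, conjTranspose_apply,
    Pi.star_apply, mulVec, dotProduct, star_sum, star_mul', star_star,
    Finset.sum_mul, Finset.mul_sum]
  apply Finset.sum_congr rfl; intro a _
  apply Finset.sum_congr rfl; intro b _
  ring

section maps
variable {n m : ℕ} (φ : Matrix (Fin n) (Fin n) ℂ →ₗ[ℂ] Matrix (Fin m) (Fin m) ℂ)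

lemma vecMulVec_expand (η μ : Fin n → ℂ) :
    vecMulVec η (star μ) =
      ∑ a, η a • vecMulVec (Pi.single a 1) (star μ) := by
  ext i j
  simp [vecMulVec, Matrix.sum_apply, Pi.single_apply, Finset.sum_ite_eq,
    ite_mul, Finset.mul_sum]

lemma exists_pos_form (hne : φ ≠ 0) (hpos : ∀ X : Matrix (Fin n) (Fin n) ℂ,
      X.PosSemidef → (φ X).PosSemidef) :
    ∃ (ξ : Fin n → ℂ) (x : Fin m → ℂ),
      0 < (star x ⬝ᵥ (φ (vecMulVec ξ (star ξ)) *ᵥ x)).re := by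
  by_contra hcon
  push_neg at hcon
  have hzero : ∀ ξ : Fin n → ℂ, φ (vecMulVec ξ (star ξ)) = 0 := by
    intro ξ
    have hp := hpos _ (psd_vecMulVec ξ)
    have hform : ∀ x, star x ⬝ᵥ (φ (vecMulVec ξ (star ξ)) *ᵥ x) = 0 := by
      intro x
      have h1 := hp.dotProduct_mulVec_nonneg x
      rw [Complex.nonneg_iff] at h1
      have h2 := hcon ξ x
      apply Complex.ext
      · exact le_antisymm h2 h1.1
      · exact h1.2.symm
    have hmv : ∀ x, φ (vecMulVec ξ (star ξ)) *ᵥ x = 0 := by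
      intro x
      exact (hp.dotProduct_mulVec_zero_iff x).mp (hform x)
    ext i j
    have := congrFun (hmv (Pi.single j 1)) i
    simpa [Matrix.mulVec_single] using this
  have hpol : ∀ η μ : Fin n → ℂ, φ (vecMulVec η (star μ)) = 0 := by
    intro η μ
    have e1 : vecMulVec (η + μ) (star (η + μ)) =
        vecMulVec η (star η) + vecMulVec η (star μ) +
          vecMulVec μ (star η) + vecMulVec μ (star μ) := by
      ext i j; simp [vecMulVec]; ring
    have hI : (starRingEnd ℂ) Complex.I = -Complex.I := Complex.conj_I
    have e2 : vecMulVec (η + Complex.I • μ) (star (η + Complex.I • μ)) =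
        vecMulVec η (star η) + (-Complex.I) • vecMulVec η (star μ) +
          Complex.I • vecMulVec μ (star η) + vecMulVec μ (star μ) := by
      ext i j
      simp only [vecMulVec, Matrix.of_apply, Pi.star_apply, Pi.add_apply, Pi.smul_apply,
        smul_eq_mul, Matrix.add_apply, Matrix.smul_apply, Complex.star_def, map_add,
        _root_.map_mul, hI]
      ring_nf
      simp only [Complex.I_sq]
      ring
    have h1 : φ (vecMulVec η (star μ)) + φ (vecMulVec μ (star η)) = 0 := by
      have h := hzero (η + μ)
      rw [e1] at h
      simp only [map_add, hzero, zero_add, add_zero] at h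
      exact h
    have h2 : (-Complex.I) • φ (vecMulVec η (star μ)) +
        Complex.I • φ (vecMulVec μ (star η)) = 0 := by
      have h := hzero (η + Complex.I • μ)
      rw [e2] at h
      simp only [map_add, LinearMap.map_smul, hzero, smul_zero, add_zero, zero_add] at h
      exact h
    have hBA : φ (vecMulVec μ (star η)) = -φ (vecMulVec η (star μ)) :=
      eq_neg_of_add_eq_zero_right h1
    rw [hBA, smul_neg, neg_smul, ← sub_eq_add_neg, ← neg_add', ← add_smul] at h2
    have h3 : (Complex.I + Complex.I) • φ (vecMulVec η (star μ)) = 0 := by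
      rw [← neg_eq_zero]; exact h2
    rcases smul_eq_zero.mp h3 with h | h
    · exfalso
      apply Complex.I_ne_zero
      have : (2:ℂ) * Complex.I = 0 := by rw [two_mul]; exact h
      simpa using this
    · exact h
  apply hne
  ext A : 1
  rw [Matrix.matrix_eq_sum_single A]
  rw [map_sum]
  simp only [LinearMap.zero_apply]
  apply Finset.sum_eq_zero
  intro a _
  rw [map_sum]
  apply Finset.sum_eq_zero
  intro b _
  have hstd : Matrix.single a b (A a b) =
      A a b • vecMulVec (Pi.single a 1) (star (Pi.single b (1:ℂ))) := by
    ext i j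
    simp only [Matrix.single, vecMulVec, Matrix.of_apply, Matrix.smul_apply,
      Pi.single_apply, Pi.star_apply, smul_eq_mul]
    by_cases hia : i = a <;> by_cases hjb : j = b <;> simp [hia, hjb] <;> intro h <;> simp_all
  rw [hstd, LinearMap.map_smul, hpol, smul_zero]
end maps

lemma emb_dot {k m : ℕ} (N : Matrix (Fin k × Fin m) (Fin k × Fin m) ℂ)
    (y x : Fin m → ℂ) (i j : Fin k) :
    star (fun p : Fin k × Fin m => if p.1 = i then y p.2 else 0) ⬝ᵥ
      (N *ᵥ fun p : Fin k × Fin m => if p.1 = j then x p.2 else 0) =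
    star y ⬝ᵥ ((Matrix.of fun s t => N (i, s) (j, t)) *ᵥ x) := by
  simp only [dotProduct, mulVec, Pi.star_apply, Matrix.of_apply,
    Fintype.sum_prod_type, mul_ite, ite_mul, mul_zero, zero_mul,
    apply_ite (star : ℂ → ℂ), star_zero]
  rw [Finset.sum_comm (γ := Fin k)]
  apply Finset.sum_congr rfl; intro s _
  simp only [Finset.sum_ite_eq', Finset.mem_univ, if_true]
  congr 1
  rw [Finset.sum_comm]
  simp [Finset.sum_ite_eq']

end Helpers

theorem stmt16 {n m : ℕ}
    (φ : Matrix (Fin n) (Fin n) ℂ →ₗ[ℂ] Matrix (Fin m) (Fin m) ℂ)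
    (hne : φ ≠ 0) (h2 : TwoPositive φ) (hext : IsExtremalPos φ) :
    CompletelyPositive φ := by
  classical
  obtain ⟨hφpos, hextr⟩ := hext
  obtain ⟨ξ, x, hlampos⟩ := exists_pos_form φ hne hφpos
  set lam : ℝ := (star x ⬝ᵥ (φ (vecMulVec ξ (star ξ)) *ᵥ x)).re with hlamdef
  have hz : star x ⬝ᵥ (φ (vecMulVec ξ (star ξ)) *ᵥ x) = (lam : ℂ) := by
    have h0 := (hφpos _ (psd_vecMulVec ξ)).dotProduct_mulVec_nonneg x
    rw [Complex.nonneg_iff] at h0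
    apply Complex.ext
    · rw [Complex.ofReal_re]
    · rw [Complex.ofReal_im]; exact h0.2.symm
  set V : Matrix (Fin m) (Fin n) ℂ :=
    Matrix.of (fun s a => (φ (vecMulVec (Pi.single a 1) (star ξ)) *ᵥ x) s) with hVdef
  have hV : ∀ η : Fin n → ℂ, V *ᵥ η = φ (vecMulVec η (star ξ)) *ᵥ x := by
    intro η
    rw [vecMulVec_expand η ξ, map_sum]
    simp only [LinearMap.map_smul]
    funext s
    rw [hVdef]
    simp only [Matrix.mulVec, dotProduct, Matrix.sum_apply, Matrix.smul_apply,
      smul_eq_mul, Matrix.of_apply, Finset.sum_mul, Finset.mul_sum]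
    rw [Finset.sum_comm]
    apply Finset.sum_congr rfl; intro a _
    apply Finset.sum_congr rfl; intro b _
    ring
  have key : ∀ (η : Fin n → ℂ) (y : Fin m → ℂ),
      Complex.normSq (star y ⬝ᵥ (V *ᵥ η)) ≤
        (star y ⬝ᵥ (φ (vecMulVec η (star η)) *ᵥ y)).re * lam := by
    intro η y
    set w0 : Fin 2 × Fin n → ℂ := fun p => if p.1 = 0 then η p.2 else ξ p.2 with hw0
    have hN := h2 _ (psd_vecMulVec w0)
    set N := amp 2 φ (vecMulVec w0 (star w0)) with hNdef
    have hB : ∀ (i j : Fin 2),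
        (Matrix.of fun s t => N (i, s) (j, t)) =
          φ (vecMulVec (fun a => w0 (i, a)) (star fun b => w0 (j, b))) := by
      intro i j
      ext s t
      show φ (Matrix.of fun a b => (vecMulVec w0 (star w0)) (i, a) (j, b)) s t = _
      have hofeq : (Matrix.of fun a b => (vecMulVec w0 (star w0)) (i, a) (j, b)) =
          vecMulVec (fun a => w0 (i, a)) (star fun b => w0 (j, b)) := by
        ext a b
        simp [vecMulVec]
      rw [hofeq]
    have hw00 : (fun a => w0 ((0 : Fin 2), a)) = η := by funext a; simp [hw0]
    have hw01 : (fun a => w0 ((1 : Fin 2), a)) = ξ := by funext a; simp [hw0]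
    have d1 := emb_dot N y x 0 1
    have d2 := emb_dot N y y 0 0
    have d3 := emb_dot N x x 1 1
    rw [hB, hw00, hw01, ← hV] at d1
    rw [hB, hw00] at d2
    rw [hB, hw01, hz] at d3
    have hcs := psd_cs hN (fun p : Fin 2 × Fin m => if p.1 = 0 then y p.2 else 0)
      (fun p : Fin 2 × Fin m => if p.1 = 1 then x p.2 else 0)
    rw [d1, d2, d3] at hcs
    simpa using hcs
  set ψ : Matrix (Fin n) (Fin n) ℂ →ₗ[ℂ] Matrix (Fin m) (Fin m) ℂ :=
    { toFun := fun A => ((lam⁻¹ : ℝ) : ℂ) • (V * A * Vᴴ),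
      map_add' := by intro A B; simp only [Matrix.mul_add, Matrix.add_mul, smul_add]
      map_smul' := by
        intro c A
        simp only [Matrix.mul_smul, Matrix.smul_mul, RingHom.id_apply]
        rw [smul_comm] } with hψdef
  have hψapp : ∀ A, ψ A = ((lam⁻¹ : ℝ) : ℂ) • (V * A * Vᴴ) := fun A => rfl
  have hlaminv : (0:ℝ) ≤ lam⁻¹ := inv_nonneg.mpr hlampos.le
  have hψpos : PosMap ψ := by
    intro A hA
    rw [hψapp]
    exact psd_smul_real (hA.mul_mul_conjTranspose_same V) hlaminv
  have hdiff : PosMap (φ - ψ) := by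
    intro A hA
    obtain ⟨u, rfl⟩ := psd_sum_rank_one hA
    rw [map_sum]
    apply psd_sum
    intro idx _
    set η := u idx with hη
    have hsub : (φ - ψ) (vecMulVec η (star η)) =
        φ (vecMulVec η (star η)) -
          ((lam⁻¹ : ℝ) : ℂ) • vecMulVec (V *ᵥ η) (star (V *ᵥ η)) := by
      rw [LinearMap.sub_apply, hψapp, conj_vecMulVec]
    rw [hsub]
    have hterm := hφpos _ (psd_vecMulVec η)
    refine Matrix.PosSemidef.of_dotProduct_mulVec_nonneg ?_ ?_
    · exact hterm.1.sub (psd_smul_real (psd_vecMulVec (V *ᵥ η)) hlaminv).1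
    · intro y
      rw [Matrix.sub_mulVec, dotProduct_sub]
      have hz1 := hterm.dotProduct_mulVec_nonneg y
      rw [Complex.nonneg_iff] at hz1
      have hform : star y ⬝ᵥ ((((lam⁻¹ : ℝ) : ℂ) • vecMulVec (V *ᵥ η) (star (V *ᵥ η))) *ᵥ y)
          = ((lam⁻¹ * Complex.normSq (star y ⬝ᵥ (V *ᵥ η)) : ℝ) : ℂ) := by
        rw [Matrix.smul_mulVec, dotProduct_smul, rank_one_form]
        push_cast
        rw [smul_eq_mul]
      rw [hform]
      have hkey := key η y
      rw [Complex.nonneg_iff]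
      have h5 : lam⁻¹ * Complex.normSq (star y ⬝ᵥ (V *ᵥ η)) ≤
          (star y ⬝ᵥ (φ (vecMulVec η (star η)) *ᵥ y)).re := by
        have h6 := mul_le_mul_of_nonneg_left hkey hlaminv
        calc lam⁻¹ * Complex.normSq (star y ⬝ᵥ (V *ᵥ η))
            ≤ lam⁻¹ * ((star y ⬝ᵥ (φ (vecMulVec η (star η)) *ᵥ y)).re * lam) := h6
        _ = (star y ⬝ᵥ (φ (vecMulVec η (star η)) *ᵥ y)).re := by
            field_simp
      constructor
      · simp only [Complex.sub_re, Complex.ofReal_re]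
        linarith
      · simp only [Complex.sub_im, Complex.ofReal_im, ← hz1.2]
        ring
  obtain ⟨l, hl0, hlφ⟩ := hextr ψ hψpos hdiff
  have hψξ : star x ⬝ᵥ (ψ (vecMulVec ξ (star ξ)) *ᵥ x) = (lam : ℂ) := by
    rw [hψapp, conj_vecMulVec, hV, Matrix.smul_mulVec, dotProduct_smul,
      rank_one_form, hz]
    rw [Complex.normSq_ofReal, smul_eq_mul]
    push_cast
    field_simp
  have hlpos : 0 < l := by
    rcases hl0.lt_or_eq with h | h
    · exact h
    · exfalso
      have hψ0 : ψ (vecMulVec ξ (star ξ)) = 0 := by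
        rw [hlφ, ← h]
        simp
      rw [hψ0] at hψξ
      simp only [Matrix.zero_mulVec, dotProduct_zero] at hψξ
      have : lam = 0 := by exact_mod_cast hψξ.symm
      linarith
  have hl' : (l : ℂ) ≠ 0 := by
    exact_mod_cast hlpos.ne'
  have hφA : ∀ A, φ A = (((l * lam)⁻¹ : ℝ) : ℂ) • (V * A * Vᴴ) := by
    intro A
    have h7 : ψ A = (l : ℂ) • φ A := by rw [hlφ]; rfl
    rw [hψapp] at h7
    calc φ A = (l : ℂ)⁻¹ • ((l : ℂ) • φ A) := by
          rw [smul_smul, inv_mul_cancel₀ hl', one_smul]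
    _ = (l : ℂ)⁻¹ • (((lam⁻¹ : ℝ) : ℂ) • (V * A * Vᴴ)) := by rw [← h7]
    _ = (((l * lam)⁻¹ : ℝ) : ℂ) • (V * A * Vᴴ) := by
          rw [smul_smul]
          congr 1
          push_cast [mul_inv]
          rfl
  intro k M hM
  set W : Matrix (Fin k × Fin m) (Fin k × Fin n) ℂ :=
    Matrix.of fun p q => if p.1 = q.1 then V p.2 q.2 else 0 with hW
  have hc : (0:ℝ) ≤ (l * lam)⁻¹ := inv_nonneg.mpr (mul_nonneg hlpos.le hlampos.le)
  have hamp : amp k φ M = (((l * lam)⁻¹ : ℝ) : ℂ) • (W * M * Wᴴ) := by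
    ext p q
    obtain ⟨i, s⟩ := p
    obtain ⟨j, t⟩ := q
    show φ (Matrix.of fun a b => M (i, a) (j, b)) s t = _
    rw [hφA]
    simp only [Matrix.smul_apply, smul_eq_mul]
    congr 1
    simp only [Matrix.mul_apply, conjTranspose_apply, Matrix.of_apply, hW,
      Fintype.sum_prod_type, ite_mul, mul_ite, zero_mul, mul_zero,
      apply_ite (star : ℂ → ℂ), star_zero]
    symm
    rw [Finset.sum_comm]
    simp only [Finset.sum_ite_eq, Finset.mem_univ, if_true]
    apply Finset.sum_congr rfl; intro b _
    congr 1
    rw [Finset.sum_comm]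
    simp only [Finset.sum_ite_eq, Finset.mem_univ, if_true]
  rw [hamp]
  exact psd_smul_real (hM.mul_mul_conjTranspose_same W) hc
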